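/- (Scalar asymptotic fluctuation relation, rate function version) Let I : ℝⁿ → ℝ ∪ {+∞}, let 𝓡 be an invertible n×n real matrix, w ∈ ℝⁿ and α ∈ ℝ with α ≠ 0 and 𝓡ᵀw = αw, and suppose I(𝓡a) = ⟨w, a⟩ + I(a) for all a ∈ ℝⁿ. Define I^Σ(σ) := inf{ I(a) : a ∈ ℝⁿ, ⟨w, a⟩ = σ } for σ ∈ ℝ (infimum over the empty set equal to +∞). Then I^Σ(σ) = σ/α + I^Σ(σ/α) for every σ ∈ ℝ. -/

import Mathlib

open Matrix

private lemma ereal_add_iInf {ι : Sort*} (c : ℝ) (f : ι → EReal) :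
    (c : EReal) + ⨅ i, f i = ⨅ i, ((c : EReal) + f i) := by
  have cancel : ∀ (d : ℝ) (x : EReal), (d : EReal) + (((-d : ℝ) : EReal) + x) = x := by
    intro d x
    rw [← add_assoc, ← EReal.coe_add, add_neg_cancel, EReal.coe_zero, zero_add]
  have le_dir : ∀ (d : ℝ) (g : ι → EReal), (d : EReal) + ⨅ i, g i ≤ ⨅ i, ((d : EReal) + g i) :=
    fun d g => le_iInf fun i => add_le_add le_rfl (iInf_le g i)
  refine le_antisymm (le_dir c f) ?_
  have h := le_dir (-c) (fun i => (c : EReal) + f i)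
  have h2 : (⨅ i, (((-c : ℝ) : EReal) + ((c : EReal) + f i))) = ⨅ i, f i := by
    refine iInf_congr fun i => ?_
    rw [← add_assoc, ← EReal.coe_add, neg_add_cancel, EReal.coe_zero, zero_add]
  rw [h2] at h
  calc (⨅ i, ((c : EReal) + f i))
      = (c : EReal) + (((-c : ℝ) : EReal) + ⨅ i, ((c : EReal) + f i)) := (cancel c _).symm
    _ ≤ (c : EReal) + ⨅ i, f i := add_le_add le_rfl h

/-- **Scalar asymptotic fluctuation relation, rate function version.**
Let `I : ℝⁿ → ℝ ∪ {+∞}` (as `EReal`-valued), `𝓡` invertible, `α ≠ 0` with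
`𝓡ᵀ *ᵥ w = α • w`, and suppose `I (𝓡 *ᵥ a) = ⟪w, a⟫ + I a` for all `a`.  Define
`ISig σ = ⨅ {a : ⟪w,a⟫ = σ} I a` (infimum over the empty set being `+∞ = ⊤`).  Then
`ISig σ = σ/α + ISig (σ/α)` for every `σ : ℝ`. -/
theorem scalar_asymptotic_FR_rate_function
    {n : ℕ} (hn : 1 ≤ n)
    (I : (Fin n → ℝ) → EReal)
    (𝓡 : Matrix (Fin n) (Fin n) ℝ) (h𝓡 : IsUnit 𝓡.det)
    (w : Fin n → ℝ) (α : ℝ) (hα : α ≠ 0) (hw : 𝓡ᵀ *ᵥ w = α • w)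
    (hI : ∀ a : Fin n → ℝ, I (𝓡 *ᵥ a) = ((w ⬝ᵥ a : ℝ) : EReal) + I a)
    (ISig : ℝ → EReal)
    (hISig : ∀ σ : ℝ, ISig σ = ⨅ a : {a : Fin n → ℝ // w ⬝ᵥ a = σ}, I a.val) :
    ∀ σ : ℝ, ISig σ = ((σ / α : ℝ) : EReal) + ISig (σ / α) := by
  intro σ
  have key : ∀ a : Fin n → ℝ, w ⬝ᵥ (𝓡 *ᵥ a) = α * (w ⬝ᵥ a) := by
    intro a
    rw [Matrix.dotProduct_mulVec, ← Matrix.mulVec_transpose, hw, smul_dotProduct,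
      smul_eq_mul]
  have hinv : ∀ b : Fin n → ℝ, 𝓡 *ᵥ (𝓡⁻¹ *ᵥ b) = b := by
    intro b
    rw [Matrix.mulVec_mulVec, Matrix.mul_nonsing_inv _ h𝓡, Matrix.one_mulVec]
  rw [hISig, hISig, ereal_add_iInf]
  apply le_antisymm
  · refine le_iInf fun a => ?_
    have hb : w ⬝ᵥ (𝓡 *ᵥ a.1) = σ := by
      rw [key, a.2, mul_div_cancel₀ _ hα]
    refine iInf_le_of_le ⟨𝓡 *ᵥ a.1, hb⟩ (le_of_eq ?_)
    rw [hI, a.2]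
  · refine le_iInf fun b => ?_
    have ha : w ⬝ᵥ (𝓡⁻¹ *ᵥ b.1) = σ / α := by
      have h := key (𝓡⁻¹ *ᵥ b.1)
      rw [hinv, b.2] at h
      rw [eq_div_iff hα]
      linear_combination -h
    refine iInf_le_of_le ⟨𝓡⁻¹ *ᵥ b.1, ha⟩ (le_of_eq ?_)
    show ((σ / α : ℝ) : EReal) + I (𝓡⁻¹ *ᵥ b.1) = I b.1
    rw [← ha, ← hI, hinv]
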